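/- arXiv:1907.03188 — 3 statements merged into one kernel-verified Lean document; each statement's English description precedes it below -/
import Mathlib

section
/- For all non-negative integers m and k, the sum over n from 0 to m of C(m,n) * C(m+n+k, m) / C(2m+n+k, n+m) * (m+2n+k+1)/(2m+n+k+1) equals 1. -/
set_option maxHeartbeats 4000000

open Finset Nat

noncomputable def Tq (m k n : ℕ) : ℚ :=
  (m.choose n : ℚ) * ((m + n + k).choose m : ℚ) / ((2 * m + n + k).choose (n + m) : ℚ)
    * ((m : ℚ) + 2 * n + k + 1) / (2 * (m : ℚ) + n + k + 1)

noncomputable def Gq (m k n : ℕ) : ℚ :=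
  -((n : ℚ) * ((n : ℚ) + k) * ((n : ℚ) + 2 * k + 3 * m + 3) * ((m : ℚ) + 2 * n + k + 1)
      * ((m + 1).choose n : ℚ) * ((m + n + k).choose m : ℚ))
    / (((n : ℚ) + 2 * m + 2 + k) * (2 * (n : ℚ) + m + k + 1) * ((m : ℚ) + 1)
      * (2 * (m : ℚ) + n + k + 1) * ((2 * m + n + k).choose (n + m) : ℚ))

noncomputable def Mq (m k n : ℕ) : ℚ :=
  ((m+n)! : ℚ) * ((m+k)! : ℚ) * ((m+n+k)! : ℚ) /
    ((n ! : ℚ) * ((m-n)! : ℚ) * ((n+k)! : ℚ) * ((2*m+n+k)! : ℚ))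

lemma Tq_eq (m k n : ℕ) (h : n ≤ m) :
    Tq m k n = ((m+n)! : ℚ) * ((m+k)! : ℚ) * ((m+n+k)! : ℚ) * ((m:ℚ)+2*n+k+1) /
      ((n ! : ℚ) * ((m-n)! : ℚ) * ((n+k)! : ℚ) * ((2*m+n+k)! : ℚ) * (2*(m:ℚ)+n+k+1)) := by
  unfold Tq
  rw [Nat.cast_choose ℚ h, Nat.cast_choose ℚ (show m ≤ m+n+k by omega),
      Nat.cast_choose ℚ (show n+m ≤ 2*m+n+k by omega)]
  have e1 : m+n+k-m = n+k := by omega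
  have e2 : 2*m+n+k-(n+m) = m+k := by omega
  rw [e1, e2]
  have z1 : ((n !) : ℚ) ≠ 0 := Nat.cast_ne_zero.mpr (Nat.factorial_ne_zero _)
  have z2 : (((m-n) !) : ℚ) ≠ 0 := Nat.cast_ne_zero.mpr (Nat.factorial_ne_zero _)
  have z3 : (((n+k) !) : ℚ) ≠ 0 := Nat.cast_ne_zero.mpr (Nat.factorial_ne_zero _)
  have z4 : (((2*m+n+k) !) : ℚ) ≠ 0 := Nat.cast_ne_zero.mpr (Nat.factorial_ne_zero _)
  have z5 : (((m+n) !) : ℚ) ≠ 0 := Nat.cast_ne_zero.mpr (Nat.factorial_ne_zero _)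
  have z6 : (((m+k) !) : ℚ) ≠ 0 := Nat.cast_ne_zero.mpr (Nat.factorial_ne_zero _)
  have z7 : (((m+n+k) !) : ℚ) ≠ 0 := Nat.cast_ne_zero.mpr (Nat.factorial_ne_zero _)
  have z8 : (2*(m:ℚ)+n+k+1) ≠ 0 := by positivity
  field_simp
  ring

lemma Gq_eq (m k n : ℕ) (h : n ≤ m + 1) :
    Gq m k n = -((n : ℚ) * ((n : ℚ) + k) * ((n : ℚ) + 2 * k + 3 * m + 3) * ((m : ℚ) + 2 * n + k + 1)
        * ((m+1)! : ℚ) * ((m+n+k)! : ℚ) * ((m+n)! : ℚ) * ((m+k)! : ℚ)) /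
      ((n ! : ℚ) * ((m+1-n)! : ℚ) * ((m)! : ℚ) * ((n+k)! : ℚ) * ((2*m+n+k)! : ℚ)
        * (((n : ℚ) + 2 * m + 2 + k) * (2 * (n : ℚ) + m + k + 1) * ((m : ℚ) + 1)
          * (2 * (m : ℚ) + n + k + 1))) := by
  unfold Gq
  rw [Nat.cast_choose ℚ h, Nat.cast_choose ℚ (show m ≤ m+n+k by omega),
      Nat.cast_choose ℚ (show n+m ≤ 2*m+n+k by omega)]
  have e1 : m+n+k-m = n+k := by omega
  have e2 : 2*m+n+k-(n+m) = m+k := by omega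
  rw [e1, e2]
  have z1 : ((n !) : ℚ) ≠ 0 := Nat.cast_ne_zero.mpr (Nat.factorial_ne_zero _)
  have z2 : (((m+1-n) !) : ℚ) ≠ 0 := Nat.cast_ne_zero.mpr (Nat.factorial_ne_zero _)
  have z3 : (((n+k) !) : ℚ) ≠ 0 := Nat.cast_ne_zero.mpr (Nat.factorial_ne_zero _)
  have z4 : (((2*m+n+k) !) : ℚ) ≠ 0 := Nat.cast_ne_zero.mpr (Nat.factorial_ne_zero _)
  have z5 : (((m+n) !) : ℚ) ≠ 0 := Nat.cast_ne_zero.mpr (Nat.factorial_ne_zero _)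
  have z6 : (((m+k) !) : ℚ) ≠ 0 := Nat.cast_ne_zero.mpr (Nat.factorial_ne_zero _)
  have z7 : (((m+n+k) !) : ℚ) ≠ 0 := Nat.cast_ne_zero.mpr (Nat.factorial_ne_zero _)
  have z9 : (((m+1)) ! : ℚ) ≠ 0 := Nat.cast_ne_zero.mpr (Nat.factorial_ne_zero _)
  have z10 : ((m ) ! : ℚ) ≠ 0 := Nat.cast_ne_zero.mpr (Nat.factorial_ne_zero _)
  have z8 : (2*(m:ℚ)+n+k+1) ≠ 0 := by positivity
  have z11 : ((n : ℚ) + 2 * m + 2 + k) ≠ 0 := by positivity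
  have z12 : (2 * (n : ℚ) + m + k + 1) ≠ 0 := by positivity
  have z13 : ((m : ℚ) + 1) ≠ 0 := by positivity
  field_simp
  ring

section reps
variable (m k n : ℕ)

lemma factq_ne (a : ℕ) : ((a !) : ℚ) ≠ 0 := Nat.cast_ne_zero.mpr (Nat.factorial_ne_zero _)

lemma Tq_rep0 (h : n ≤ m) :
    Tq m k n = Mq m k n * ((m:ℚ)+2*n+k+1) / (2*(m:ℚ)+n+k+1) := by
  rw [Tq_eq m k n h]
  unfold Mq
  have z8 : (2*(m:ℚ)+n+k+1) ≠ 0 := by positivity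
  field_simp

lemma Tq_rep1 (h : n ≤ m) :
    Tq (m+1) k n = Mq m k n *
      (((m:ℚ)+n+1)*((m:ℚ)+k+1)*((m:ℚ)+n+k+1)*((m:ℚ)+2*n+k+2)) /
      (((m:ℚ)-n+1)*(2*(m:ℚ)+n+k+1)*(2*(m:ℚ)+n+k+2)*(2*(m:ℚ)+n+k+3)) := by
  rw [Tq_eq (m+1) k n (by omega)]
  rw [show m+1+n+k = (m+n+k)+1 by omega, show m+1+n = (m+n)+1 by omega,
      show m+1+k = (m+k)+1 by omega, show m+1-n = (m-n)+1 by omega,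
      show 2*(m+1)+n+k = ((2*m+n+k)+1)+1 by omega]
  unfold Mq
  simp only [Nat.factorial_succ]
  push_cast [Nat.cast_sub h]
  have z1 := factq_ne n
  have z2 := factq_ne (m-n)
  have z3 := factq_ne (n+k)
  have z4 := factq_ne (2*m+n+k)
  have p1 : (2*(m:ℚ)+n+k+1) ≠ 0 := by positivity
  have p2 : (2*(m:ℚ)+n+k+1+1) ≠ 0 := by positivity
  have p3 : (2*(m:ℚ)+n+k+1+1+1) ≠ 0 := by positivity
  have hmn : (n:ℚ) ≤ (m:ℚ) := by exact_mod_cast h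
  have p4 : ((m:ℚ)-n+1) ≠ 0 := by nlinarith
  field_simp
  ring

lemma Gq_rep0 (h : n ≤ m) :
    Gq m k n = Mq m k n * (-((n:ℚ)*((n:ℚ)+k)*(3*(m:ℚ)+n+2*k+3))) /
      (((m:ℚ)-n+1)*(2*(m:ℚ)+n+k+1)*(2*(m:ℚ)+n+k+2)) := by
  rw [Gq_eq m k n (by omega), show m+1-n = (m-n)+1 by omega]
  unfold Mq
  simp only [Nat.factorial_succ]
  push_cast [Nat.cast_sub h]
  have z1 := factq_ne n
  have z2 := factq_ne (m-n)
  have z3 := factq_ne (n+k)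
  have z4 := factq_ne (2*m+n+k)
  have z5 := factq_ne m
  have p1 : (2*(m:ℚ)+n+k+1) ≠ 0 := by positivity
  have p2 : (2*(m:ℚ)+n+k+2) ≠ 0 := by positivity
  have p3 : ((n:ℚ)+2*m+2+k) ≠ 0 := by positivity
  have p4 : (2*(n:ℚ)+m+k+1) ≠ 0 := by positivity
  have p5 : ((m:ℚ)+1) ≠ 0 := by positivity
  have hmn : (n:ℚ) ≤ (m:ℚ) := by exact_mod_cast h
  have p6 : ((m:ℚ)-n+1) ≠ 0 := by nlinarith
  field_simp
  ring

lemma Gq_rep1 (h : n ≤ m) :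
    Gq m k (n+1) = Mq m k n * (-((3*(m:ℚ)+n+2*k+4)*((m:ℚ)+n+k+1)*((m:ℚ)+n+1))) /
      ((2*(m:ℚ)+n+k+1)*(2*(m:ℚ)+n+k+2)*(2*(m:ℚ)+n+k+3)) := by
  rw [Gq_eq m k (n+1) (by omega)]
  rw [show m+(n+1)+k = (m+n+k)+1 by omega, show m+(n+1) = (m+n)+1 by omega,
      show m+1-(n+1) = m-n by omega, show 2*m+(n+1)+k = (2*m+n+k)+1 by omega,
      show n+1+k = (n+k)+1 by omega]
  unfold Mq
  simp only [Nat.factorial_succ]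
  push_cast
  have z1 := factq_ne n
  have z2 := factq_ne (m-n)
  have z3 := factq_ne (n+k)
  have z4 := factq_ne (2*m+n+k)
  have z5 := factq_ne m
  have p1 : (2*(m:ℚ)+n+k+1) ≠ 0 := by positivity
  have p2 : (2*(m:ℚ)+n+k+2) ≠ 0 := by positivity
  have p3 : (2*(m:ℚ)+n+k+3) ≠ 0 := by positivity
  have p4 : ((n:ℚ)+1) ≠ 0 := by positivity
  have p5 : ((n:ℚ)+k+1) ≠ 0 := by positivity
  have p6 : ((n:ℚ)+1+2*m+2+k) ≠ 0 := by positivity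
  have p7 : (2*((n:ℚ)+1)+m+k+1) ≠ 0 := by positivity
  have p8 : ((m:ℚ)+1) ≠ 0 := by positivity
  have p9 : (2*(m:ℚ)+(n+1)+k+1) ≠ 0 := by positivity
  field_simp
  ring

end reps

lemma scalar_id (m k n : ℕ) (h : n ≤ m) :
    (((m:ℚ)+n+1)*((m:ℚ)+k+1)*((m:ℚ)+n+k+1)*((m:ℚ)+2*n+k+2)) /
      (((m:ℚ)-n+1)*(2*(m:ℚ)+n+k+1)*(2*(m:ℚ)+n+k+2)*(2*(m:ℚ)+n+k+3))
    - ((m:ℚ)+2*n+k+1) / (2*(m:ℚ)+n+k+1)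
    = (-((3*(m:ℚ)+n+2*k+4)*((m:ℚ)+n+k+1)*((m:ℚ)+n+1))) /
      ((2*(m:ℚ)+n+k+1)*(2*(m:ℚ)+n+k+2)*(2*(m:ℚ)+n+k+3))
    - (-((n:ℚ)*((n:ℚ)+k)*(3*(m:ℚ)+n+2*k+3))) /
      (((m:ℚ)-n+1)*(2*(m:ℚ)+n+k+1)*(2*(m:ℚ)+n+k+2)) := by
  have hmn : (n:ℚ) ≤ (m:ℚ) := by exact_mod_cast h
  have p0 : ((m:ℚ)-n+1) ≠ 0 := by nlinarith
  have p1 : (2*(m:ℚ)+n+k+1) ≠ 0 := by positivity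
  have p2 : (2*(m:ℚ)+n+k+2) ≠ 0 := by positivity
  have p3 : (2*(m:ℚ)+n+k+3) ≠ 0 := by positivity
  field_simp
  ring

lemma key (m k n : ℕ) (h : n ≤ m) :
    Tq (m+1) k n - Tq m k n = Gq m k (n+1) - Gq m k n := by
  rw [Tq_rep1 m k n h, Tq_rep0 m k n h, Gq_rep1 m k n h, Gq_rep0 m k n h]
  have hs := scalar_id m k n h
  linear_combination (Mq m k n) * hs

lemma key2 (m k : ℕ) :
    Tq (m+1) k (m+1) - Tq m k (m+1) = Gq m k (m+2) - Gq m k (m+1) := by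
  have h0 : Tq m k (m+1) = 0 := by
    simp [Tq, Nat.choose_eq_zero_of_lt (Nat.lt_succ_self m)]
  have h2 : Gq m k (m+2) = 0 := by
    simp [Gq, Nat.choose_eq_zero_of_lt (show m + 1 < m + 2 by omega)]
  rw [h0, h2, sub_zero, zero_sub]
  rw [Tq_eq (m+1) k (m+1) le_rfl, Gq_eq m k (m+1) le_rfl]
  rw [show m+1+(m+1)+k = (m+(m+1)+k)+1 by omega,
      show m+1+(m+1) = (m+(m+1))+1 by omega,
      show m+1+k = (m+k)+1 by omega,
      show m+1-(m+1) = 0 by omega,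
      show 2*(m+1)+(m+1)+k = ((2*m+(m+1)+k)+1)+1 by omega]
  simp only [Nat.factorial_succ, Nat.factorial_zero]
  push_cast
  have z1 := factq_ne m
  have z2 := factq_ne (m+k)
  have z3 := factq_ne (m+(m+1))
  have z4 := factq_ne (m+(m+1)+k)
  have z5 := factq_ne (2*m+(m+1)+k)
  have p1 : (2*((m:ℚ)+1)+(m+1)+k+1) ≠ 0 := by positivity
  have p2 : ((m:ℚ)+1+2*m+2+k) ≠ 0 := by positivity
  have p3 : (2*((m:ℚ)+1)+m+k+1) ≠ 0 := by positivity
  have p4 : ((m:ℚ)+1) ≠ 0 := by positivity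
  have p5 : (2*(m:ℚ)+(m+1)+k+1) ≠ 0 := by positivity
  field_simp
  ring

lemma sum_Tq (k m : ℕ) : ∑ n ∈ Finset.range (m+1), Tq m k n = 1 := by
  induction m with
  | zero =>
    have hk : ((k:ℚ)+1) ≠ 0 := by positivity
    simp only [Finset.range_one, Finset.sum_singleton, Tq]
    norm_num
    exact hk
  | succ m ih =>
    have hstep : ∀ n ∈ Finset.range (m+2),
        Tq (m+1) k n = Tq m k n + (Gq m k (n+1) - Gq m k n) := by
      intro n hn
      have hn' : n ≤ m + 1 := by
        simp only [Finset.mem_range] at hn; omega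
      rcases Nat.lt_or_ge n (m+1) with h | h
      · have := key m k n (by omega)
        linarith
      · have hn2 : n = m + 1 := by omega
        subst hn2
        have := key2 m k
        linarith
    have tele : ∑ n ∈ Finset.range (m+2), (Gq m k (n+1) - Gq m k n)
        = Gq m k (m+2) - Gq m k 0 := Finset.sum_range_sub (fun n => Gq m k n) (m+2)
    have gz0 : Gq m k 0 = 0 := by simp [Gq]
    have gz2 : Gq m k (m+2) = 0 := by
      simp [Gq, Nat.choose_eq_zero_of_lt (show m + 1 < m + 2 by omega)]
    have h0 : Tq m k (m+1) = 0 := by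
      simp [Tq, Nat.choose_eq_zero_of_lt (Nat.lt_succ_self m)]
    calc ∑ n ∈ Finset.range (m+2), Tq (m+1) k n
        = ∑ n ∈ Finset.range (m+2), (Tq m k n + (Gq m k (n+1) - Gq m k n)) :=
          Finset.sum_congr rfl hstep
      _ = (∑ n ∈ Finset.range (m+2), Tq m k n)
          + ∑ n ∈ Finset.range (m+2), (Gq m k (n+1) - Gq m k n) := Finset.sum_add_distrib
      _ = 1 := by
          rw [Finset.sum_range_succ, h0, add_zero, ih, tele, gz0, gz2]; ring

theorem binomial_identity (m k : ℕ) :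
    ∑ n ∈ Finset.range (m + 1),
      (m.choose n : ℚ) * ((m + n + k).choose m : ℚ) / ((2 * m + n + k).choose (n + m) : ℚ)
        * ((m : ℚ) + 2 * n + k + 1) / (2 * (m : ℚ) + n + k + 1) = 1 := by
  have := sum_Tq k m
  simp only [Tq] at this
  exact this
end

section
/- For non-negative integers m, k with k ≥ m, the sum over n from 0 to m of C(m,n) * C(n+k, m) / C(m+n+k, n+m) * (2n+k+1)/(n+m+k+1) equals 1. -/
open Nat

set_option maxHeartbeats 1000000

def Tm (m k n : ℕ) : ℚ :=
  (m.choose n : ℚ) * ((n + k).choose m : ℚ) / ((m + n + k).choose (n + m) : ℚ)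
    * (2 * (n : ℚ) + k + 1) / ((n : ℚ) + m + k + 1)

def Gf (m k n : ℕ) : ℚ :=
  -2 * n * ((n : ℚ) + k - m) * (((m+1).choose n : ℚ) * ((n + k).choose m : ℚ))
    / (((m : ℚ) + 1) * ((n : ℚ) + m + k + 1) * ((m + n + k).choose (n + m) : ℚ))

lemma cast_choose_add (x y : ℕ) :
    (((x + y).choose x : ℕ) : ℚ) = ((x + y)! : ℚ) / ((x ! : ℚ) * (y ! : ℚ)) := by
  rw [Nat.cast_choose ℚ (Nat.le_add_right x y), Nat.add_sub_cancel_left]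

lemma bigaux (X Y Z A B C D E F2 G2 H2 : ℚ)
    (hA : A ≠ 0) (hB : B ≠ 0) (hC : C ≠ 0) (hD : D ≠ 0) (hE : E ≠ 0)
    (hF : F2 ≠ 0) (hG : G2 ≠ 0) (hH : H2 ≠ 0)
    (g1 : X + 1 ≠ 0) (g2 : Y + 1 ≠ 0) (g3 : X + Y + 1 ≠ 0)
    (g4 : X + Z + 1 ≠ 0) (g5 : X + Z + 2 ≠ 0) (g6 : 2*X + Y + 1 ≠ 0)
    (g7 : X + Y + Z + 1 ≠ 0)
    (g10 : 3*X + 2*Y + Z + 1 ≠ 0) (g11 : 3*X + 2*Y + Z + 2 ≠ 0)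
    (g12 : 3*X + 2*Y + Z + 3 ≠ 0) :
    (X+Y+1)*C/(A*((Y+1)*B)) * ((2*X+Y+Z+1)*F2/((X+Y+1)*C*D))
        / ((3*X+2*Y+Z+2)*(3*X+2*Y+Z+1)*G2/((2*X+Y+1)*E*((X+Y+Z+1)*H2)))
        * (2*X+(X+Y+1+Z)+1) / (X+(X+Y+1)+(X+Y+1+Z)+1)
      = C/(A*B) * ((2*X+Y+Z+1)*F2/(C*((X+Z+1)*D)))
            / ((3*X+2*Y+Z+1)*G2/(E*((X+Y+Z+1)*H2)))
            * (2*X+(X+Y+1+Z)+1) / (X+(X+Y)+(X+Y+1+Z)+1)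
        + (-2*(X+1)*(X+1+(X+Y+1+Z)-(X+Y))
              * ((X+Y+1)*C/((X+1)*A*B)
                * ((2*X+Y+Z+2)*(2*X+Y+Z+1)*F2/(C*((X+Z+2)*((X+Z+1)*D)))))
              / ((X+Y+1)*(X+1+(X+Y)+(X+Y+1+Z)+1)
                * ((3*X+2*Y+Z+2)*(3*X+2*Y+Z+1)*G2/((2*X+Y+1)*E*((X+Y+Z+1)*H2))))
          - -2*X*(X+(X+Y+1+Z)-(X+Y))
              * ((X+Y+1)*C/(A*((Y+1)*B)) * ((2*X+Y+Z+1)*F2/(C*((X+Z+1)*D))))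
              / ((X+Y+1)*(X+(X+Y)+(X+Y+1+Z)+1)
                * ((3*X+2*Y+Z+1)*G2/(E*((X+Y+Z+1)*H2))))) := by
  rw [show 2*X+(X+Y+1+Z)+1 = 3*X+Y+Z+2 from by ring,
      show X+(X+Y+1)+(X+Y+1+Z)+1 = 3*X+2*Y+Z+3 from by ring,
      show X+(X+Y)+(X+Y+1+Z)+1 = 3*X+2*Y+Z+2 from by ring,
      show X+1+(X+Y+1+Z)-(X+Y) = X+Z+2 from by ring,
      show X+(X+Y+1+Z)-(X+Y) = X+Z+1 from by ring,
      show X+1+(X+Y)+(X+Y+1+Z)+1 = 3*X+2*Y+Z+3 from by ring]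
  have E1 : (X+Y+1)*C/(A*((Y+1)*B)) * ((2*X+Y+Z+1)*F2/((X+Y+1)*C*D))
        / ((3*X+2*Y+Z+2)*(3*X+2*Y+Z+1)*G2/((2*X+Y+1)*E*((X+Y+Z+1)*H2)))
        * (3*X+Y+Z+2) / (3*X+2*Y+Z+3)
      = F2*E*H2*((2*X+Y+Z+1)*(X+Y+Z+1))*((2*X+Y+1)*(3*X+Y+Z+2)*(X+Z+1))
        / (A*B*D*G2*((Y+1)*(X+Z+1)*(3*X+2*Y+Z+1)*(3*X+2*Y+Z+2)*(3*X+2*Y+Z+3))) := by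
    field_simp
  have E0 : C/(A*B) * ((2*X+Y+Z+1)*F2/(C*((X+Z+1)*D)))
        / ((3*X+2*Y+Z+1)*G2/(E*((X+Y+Z+1)*H2)))
        * (3*X+Y+Z+2) / (3*X+2*Y+Z+2)
      = F2*E*H2*((2*X+Y+Z+1)*(X+Y+Z+1))*((3*X+Y+Z+2)*(Y+1)*(3*X+2*Y+Z+3))
        / (A*B*D*G2*((Y+1)*(X+Z+1)*(3*X+2*Y+Z+1)*(3*X+2*Y+Z+2)*(3*X+2*Y+Z+3))) := by
    field_simp
    have h10 : X*3+2*Y+Z+1 ≠ 0 := by contrapose! g10; linarith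
    have h11 : X*3+2*Y+Z+2 ≠ 0 := by contrapose! g11; linarith
    have h12 : X*3+2*Y+Z+3 ≠ 0 := by contrapose! g12; linarith
    field_simp
  have EG1 : -2*(X+1)*(X+Z+2)
        * ((X+Y+1)*C/((X+1)*A*B)
          * ((2*X+Y+Z+2)*(2*X+Y+Z+1)*F2/(C*((X+Z+2)*((X+Z+1)*D)))))
        / ((X+Y+1)*(3*X+2*Y+Z+3)
          * ((3*X+2*Y+Z+2)*(3*X+2*Y+Z+1)*G2/((2*X+Y+1)*E*((X+Y+Z+1)*H2))))
      = -2*(F2*E*H2*((2*X+Y+Z+1)*(X+Y+Z+1)))*((2*X+Y+Z+2)*(2*X+Y+1)*(Y+1))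
        / (A*B*D*G2*((Y+1)*(X+Z+1)*(3*X+2*Y+Z+1)*(3*X+2*Y+Z+2)*(3*X+2*Y+Z+3))) := by
    field_simp
  have EG0 : -2*X*(X+Z+1)
        * ((X+Y+1)*C/(A*((Y+1)*B)) * ((2*X+Y+Z+1)*F2/(C*((X+Z+1)*D))))
        / ((X+Y+1)*(3*X+2*Y+Z+2) * ((3*X+2*Y+Z+1)*G2/(E*((X+Y+Z+1)*H2))))
      = -2*X*(F2*E*H2*((2*X+Y+Z+1)*(X+Y+Z+1)))*((X+Z+1)*(3*X+2*Y+Z+3))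
        / (A*B*D*G2*((Y+1)*(X+Z+1)*(3*X+2*Y+Z+1)*(3*X+2*Y+Z+2)*(3*X+2*Y+Z+3))) := by
    field_simp
    have h10 : X*3+2*Y+Z+1 ≠ 0 := by contrapose! g10; linarith
    have h11 : X*3+2*Y+Z+2 ≠ 0 := by contrapose! g11; linarith
    have h12 : X*3+2*Y+Z+3 ≠ 0 := by contrapose! g12; linarith
    field_simp
  rw [E1, E0, EG1, EG0, div_sub_div_same, ← add_div]
  congr 1
  ring

lemma key_s1 (n a b : ℕ) :
    Tm (n+a+1) (n+a+1+b) n = Tm (n+a) (n+a+1+b) n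
      + (Gf (n+a) (n+a+1+b) (n+1) - Gf (n+a) (n+a+1+b) n) := by
  have f1 : ((n ! : ℕ) : ℚ) ≠ 0 := by positivity
  have f2 : ((a ! : ℕ) : ℚ) ≠ 0 := by positivity
  have f3 : (((n+a) ! : ℕ) : ℚ) ≠ 0 := by positivity
  have f4 : (((n+b) ! : ℕ) : ℚ) ≠ 0 := by positivity
  have f5 : (((n+n+a) ! : ℕ) : ℚ) ≠ 0 := by positivity
  have f6 : (((n+n+a+b) ! : ℕ) : ℚ) ≠ 0 := by positivity
  have f7 : (((n+n+n+a+a+b) ! : ℕ) : ℚ) ≠ 0 := by positivity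
  have f8 : (((n+a+b) ! : ℕ) : ℚ) ≠ 0 := by positivity
  have h1 : (((n+a+1).choose n : ℕ) : ℚ)
      = ((n:ℚ)+a+1) * ((n+a)! : ℚ) / ((n ! : ℚ) * (((a:ℚ)+1) * (a ! : ℚ))) := by
    rw [show n+a+1 = n+(a+1) by omega, cast_choose_add,
        show n+(a+1) = (n+a)+1 by omega]
    simp only [Nat.factorial_succ]
    push_cast; ring
  have h2 : (((n + (n+a+1+b)).choose (n+a+1) : ℕ) : ℚ)
      = (2*(n:ℚ)+a+b+1) * ((n+n+a+b)! : ℚ)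
        / ((((n:ℚ)+a+1) * ((n+a)! : ℚ)) * ((n+b)! : ℚ)) := by
    rw [show n + (n+a+1+b) = (n+a+1) + (n+b) by omega, cast_choose_add,
        show (n+a+1)+(n+b) = n+n+a+b+1 by omega]
    simp only [Nat.factorial_succ]
    push_cast; ring
  have h3 : (((n+a+1+n+(n+a+1+b)).choose (n + (n+a+1)) : ℕ) : ℚ)
      = (3*(n:ℚ)+2*a+b+2) * (3*(n:ℚ)+2*a+b+1) * ((n+n+n+a+a+b)! : ℚ)
        / ((2*(n:ℚ)+a+1) * ((n+n+a)! : ℚ) * (((n:ℚ)+a+b+1) * ((n+a+b)! : ℚ))) := by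
    rw [show n + (n+a+1) = n+n+a+1 by omega,
        show n+a+1+n+(n+a+1+b) = (n+n+a+1) + (n+a+b+1) by omega, cast_choose_add,
        show (n+n+a+1)+(n+a+b+1) = n+n+n+a+a+b+1+1 by omega]
    simp only [Nat.factorial_succ]
    push_cast; ring
  have h4 : (((n+a).choose n : ℕ) : ℚ) = ((n+a)! : ℚ) / ((n ! : ℚ) * (a ! : ℚ)) :=
    cast_choose_add n a
  have h5 : (((n + (n+a+1+b)).choose (n+a) : ℕ) : ℚ)
      = (2*(n:ℚ)+a+b+1) * ((n+n+a+b)! : ℚ)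
        / (((n+a)! : ℚ) * (((n:ℚ)+b+1) * ((n+b)! : ℚ))) := by
    rw [show n + (n+a+1+b) = (n+a) + (n+b+1) by omega, cast_choose_add,
        show (n+a)+(n+b+1) = n+n+a+b+1 by omega]
    simp only [Nat.factorial_succ]
    push_cast; ring
  have h6 : (((n+a+n+(n+a+1+b)).choose (n + (n+a)) : ℕ) : ℚ)
      = (3*(n:ℚ)+2*a+b+1) * ((n+n+n+a+a+b)! : ℚ)
        / (((n+n+a)! : ℚ) * (((n:ℚ)+a+b+1) * ((n+a+b)! : ℚ))) := by
    rw [show n + (n+a) = n+n+a by omega,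
        show n+a+n+(n+a+1+b) = (n+n+a) + (n+a+b+1) by omega, cast_choose_add,
        show (n+n+a)+(n+a+b+1) = n+n+n+a+a+b+1 by omega]
    simp only [Nat.factorial_succ]
    push_cast; ring
  have h7 : (((n+a+1).choose (n+1) : ℕ) : ℚ)
      = ((n:ℚ)+a+1) * ((n+a)! : ℚ) / ((((n:ℚ)+1) * (n ! : ℚ)) * (a ! : ℚ)) := by
    rw [show n+a+1 = (n+1)+a by omega, cast_choose_add,
        show (n+1)+a = (n+a)+1 by omega]
    simp only [Nat.factorial_succ]
    push_cast; ring
  have h8 : (((n+1+(n+a+1+b)).choose (n+a) : ℕ) : ℚ)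
      = (2*(n:ℚ)+a+b+2) * (2*(n:ℚ)+a+b+1) * ((n+n+a+b)! : ℚ)
        / (((n+a)! : ℚ) * (((n:ℚ)+b+2) * (((n:ℚ)+b+1) * ((n+b)! : ℚ)))) := by
    rw [show n+1+(n+a+1+b) = (n+a) + (n+b+1+1) by omega, cast_choose_add,
        show (n+a)+(n+b+1+1) = n+n+a+b+1+1 by omega]
    simp only [Nat.factorial_succ]
    push_cast; ring
  have h9 : (((n+a+(n+1)+(n+a+1+b)).choose (n+1 + (n+a)) : ℕ) : ℚ)
      = (3*(n:ℚ)+2*a+b+2) * (3*(n:ℚ)+2*a+b+1) * ((n+n+n+a+a+b)! : ℚ)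
        / ((2*(n:ℚ)+a+1) * ((n+n+a)! : ℚ) * (((n:ℚ)+a+b+1) * ((n+a+b)! : ℚ))) := by
    rw [show n+1 + (n+a) = n+n+a+1 by omega,
        show n+a+(n+1)+(n+a+1+b) = (n+n+a+1) + (n+a+b+1) by omega, cast_choose_add,
        show (n+n+a+1)+(n+a+b+1) = n+n+n+a+a+b+1+1 by omega]
    simp only [Nat.factorial_succ]
    push_cast; ring
  have g1 : (n:ℚ) + 1 ≠ 0 := by positivity
  have g2 : (a:ℚ) + 1 ≠ 0 := by positivity
  have g3 : (n:ℚ) + a + 1 ≠ 0 := by positivity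
  have g4 : (n:ℚ) + b + 1 ≠ 0 := by positivity
  have g5 : (n:ℚ) + b + 2 ≠ 0 := by positivity
  have g6 : 2*(n:ℚ) + a + 1 ≠ 0 := by positivity
  have g7 : (n:ℚ) + a + b + 1 ≠ 0 := by positivity
  have g10 : 3*(n:ℚ) + 2*a + b + 1 ≠ 0 := by positivity
  have g11 : 3*(n:ℚ) + 2*a + b + 2 ≠ 0 := by positivity
  have g12 : 3*(n:ℚ) + 2*a + b + 3 ≠ 0 := by positivity
  unfold Tm Gf
  rw [h1, h2, h3, h4, h5, h6, h7, h8, h9]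
  push_cast
  exact bigaux (n:ℚ) (a:ℚ) (b:ℚ) ((n ! : ℕ) : ℚ) ((a ! : ℕ) : ℚ)
    (((n+a) ! : ℕ) : ℚ) (((n+b) ! : ℕ) : ℚ) (((n+n+a) ! : ℕ) : ℚ)
    (((n+n+a+b) ! : ℕ) : ℚ) (((n+n+n+a+a+b) ! : ℕ) : ℚ) (((n+a+b) ! : ℕ) : ℚ)
    f1 f2 f3 f4 f5 f6 f7 f8 g1 g2 g3 g4 g5 g6 g7 g10 g11 g12

lemma top (m b : ℕ) :
    Gf m (m+1+b) (m+1) + Tm (m+1) (m+1+b) (m+1) = 0 := by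
  have f1 : ((m ! : ℕ) : ℚ) ≠ 0 := by positivity
  have f2 : (((m+b+1) ! : ℕ) : ℚ) ≠ 0 := by positivity
  have f3 : (((m+m+1) ! : ℕ) : ℚ) ≠ 0 := by positivity
  have f4 : (((m+m+b+2) ! : ℕ) : ℚ) ≠ 0 := by positivity
  have f5 : (((m+m+m+b+2) ! : ℕ) : ℚ) ≠ 0 := by positivity
  have c2 : (((m+1+(m+1+b)).choose m : ℕ) : ℚ)
      = ((m+m+b+2)! : ℚ) / ((m ! : ℚ) * (((m:ℚ)+b+2) * ((m+b+1)! : ℚ))) := by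
    rw [show m+1+(m+1+b) = m + (m+b+2) by omega, cast_choose_add,
        show m+(m+b+2) = m+m+b+2 by omega, show m+b+2 = (m+b+1)+1 by omega]
    simp only [Nat.factorial_succ]
    push_cast; ring
  have c3 : (((m+(m+1)+(m+1+b)).choose (m+1+m) : ℕ) : ℚ)
      = ((m+m+m+b+2)! : ℚ) / (((m+m+1)! : ℚ) * ((m+b+1)! : ℚ)) := by
    rw [show m+1+m = m+m+1 by omega,
        show m+(m+1)+(m+1+b) = (m+m+1) + (m+b+1) by omega, cast_choose_add,
        show (m+m+1)+(m+b+1) = m+m+m+b+2 by omega]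
  have c4 : (((m+1+(m+1+b)).choose (m+1) : ℕ) : ℚ)
      = ((m+m+b+2)! : ℚ) / ((((m:ℚ)+1) * (m ! : ℚ)) * ((m+b+1)! : ℚ)) := by
    rw [show m+1+(m+1+b) = (m+1) + (m+b+1) by omega, cast_choose_add,
        show (m+1)+(m+b+1) = m+m+b+2 by omega]
    simp only [Nat.factorial_succ]
    push_cast; ring
  have c5 : (((m+1+(m+1)+(m+1+b)).choose (m+1+(m+1)) : ℕ) : ℚ)
      = (3*(m:ℚ)+b+3) * ((m+m+m+b+2)! : ℚ)
        / ((2*(m:ℚ)+2) * ((m+m+1)! : ℚ) * ((m+b+1)! : ℚ)) := by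
    rw [show m+1+(m+1) = m+m+1+1 by omega,
        show m+m+1+1+(m+1+b) = (m+m+1+1) + (m+b+1) by omega, cast_choose_add,
        show (m+m+1+1)+(m+b+1) = m+m+m+b+2+1 by omega]
    simp only [Nat.factorial_succ]
    push_cast; ring
  have g1 : (m:ℚ)+1 ≠ 0 := by positivity
  have g2 : (m:ℚ)+b+2 ≠ 0 := by positivity
  have g3 : 3*(m:ℚ)+b+3 ≠ 0 := by positivity
  have g4 : 2*(m:ℚ)+2 ≠ 0 := by positivity
  have g5 : 3*(m:ℚ)+b+4 ≠ 0 := by positivity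
  unfold Tm Gf
  rw [c2, c3, c4, c5]
  simp only [Nat.choose_self, Nat.cast_one]
  push_cast
  field_simp
  ring

lemma main (m k : ℕ) (h : m ≤ k) : ∑ n ∈ Finset.range (m+1), Tm m k n = 1 := by
  induction m generalizing k with
  | zero =>
      rw [Finset.sum_range_one]
      unfold Tm
      simp only [Nat.choose_self, Nat.choose_zero_right, Nat.cast_one, Nat.cast_zero,
        Nat.zero_add, Nat.add_zero]
      have hk : (k:ℚ) + 1 ≠ 0 := by positivity
      field_simp
      ring
  | succ m ih =>
      obtain ⟨b, rfl⟩ : ∃ b, k = m+1+b := ⟨k-(m+1), by omega⟩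
      rw [Finset.sum_range_succ]
      have hs : ∑ n ∈ Finset.range (m+1), Tm (m+1) (m+1+b) n
          = ∑ n ∈ Finset.range (m+1),
              (Tm m (m+1+b) n + (Gf m (m+1+b) (n+1) - Gf m (m+1+b) n)) := by
        refine Finset.sum_congr rfl fun n hn => ?_
        have hnm : n ≤ m := Nat.lt_succ_iff.mp (Finset.mem_range.mp hn)
        obtain ⟨a, rfl⟩ : ∃ a, m = n + a := ⟨m-n, by omega⟩
        exact key_s1 n a b
      rw [hs, Finset.sum_add_distrib, Finset.sum_range_sub (fun n => Gf m (m+1+b) n),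
        ih (m+1+b) (by omega)]
      have h0 : Gf m (m+1+b) 0 = 0 := by simp [Gf]
      rw [h0]
      have := top m b
      linarith

theorem binomial_identity_shifted (m k : ℕ) (hk : m ≤ k) :
    ∑ n ∈ Finset.range (m + 1),
      (m.choose n : ℚ) * ((n + k).choose m : ℚ) / ((m + n + k).choose (n + m) : ℚ)
        * (2 * (n : ℚ) + k + 1) / ((n : ℚ) + m + k + 1) = 1 := by
  exact main m k hk
end

section
/- For every integer k ≥ 2, 1/π = (1/2)_k · Σ_{n=0}^∞ (−1)^n · [(1/2)_n / n!]^3 · (n+1/2)_k · (k+2n+1/2) / [(n+1)_k]^2. -/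
/-- Rising factorial (Pochhammer symbol) `(x)_n`. -/
def risingFac (x : ℝ) (n : ℕ) : ℝ := ∏ i ∈ Finset.range n, (x + i)

lemma rf_succ (x : ℝ) (n : ℕ) : risingFac x (n+1) = risingFac x n * (x + n) :=
  Finset.prod_range_succ _ _

lemma rf_zero (x : ℝ) : risingFac x 0 = 1 := rfl

lemma rf_pos {x : ℝ} (hx : 0 < x) (n : ℕ) : 0 < risingFac x n :=
  Finset.prod_pos fun i _ => by positivity

lemma rf_half_pos (n : ℕ) : 0 < risingFac (1/2) n := rf_pos (by norm_num) n

/-- (iv): rf(1/2,n+k)·k! ≤ rf(1/2,k)·(n+k)! -/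
lemma rf_mono (n k : ℕ) :
    risingFac (1/2) (n+k) * (k.factorial : ℝ) ≤ risingFac (1/2) k * ((n+k).factorial : ℝ) := by
  induction n with
  | zero => simp
  | succ n ih =>
    have h1 : n + 1 + k = (n + k) + 1 := by omega
    rw [h1, rf_succ, Nat.factorial_succ]
    push_cast
    have h2 : (0:ℝ) < risingFac (1/2) (n+k) := rf_half_pos _
    have h3 : (0:ℝ) < risingFac (1/2) k := rf_half_pos _
    have h4 : (0:ℝ) < ((n+k).factorial : ℝ) := by exact_mod_cast Nat.factorial_pos _
    nlinarith [h2, h3, h4, ih]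

lemma rf_le_fact (n : ℕ) : risingFac (1/2) n ≤ (n.factorial : ℝ) := by
  have := rf_mono n 0
  simpa [rf_zero] using this

/-- (iii): rf(1/2,n)²·(2n+1) ≤ n!² -/
lemma rf_sq_bound (n : ℕ) :
    risingFac (1/2) n ^ 2 * (2*(n:ℝ)+1) ≤ (n.factorial : ℝ)^2 := by
  induction n with
  | zero => norm_num [rf_zero]
  | succ n ih =>
    rw [rf_succ, Nat.factorial_succ]
    push_cast
    have h2 : (0:ℝ) ≤ risingFac (1/2) n ^ 2 := sq_nonneg _
    have h3 : (0:ℝ) < (n.factorial : ℝ) := by exact_mod_cast Nat.factorial_pos _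
    have key : ((1:ℝ)/2+n)^2*(2*(n:ℝ)+3) ≤ (2*(n:ℝ)+1)*((n:ℝ)+1)^2 := by
      nlinarith [Nat.cast_nonneg (α := ℝ) n]
    calc (risingFac (1/2) n * (1/2 + (n:ℝ))) ^ 2 * (2*((n:ℝ)+1)+1)
        = risingFac (1/2) n ^ 2 * (((1:ℝ)/2+n)^2*(2*(n:ℝ)+3)) := by ring
      _ ≤ risingFac (1/2) n ^ 2 * ((2*(n:ℝ)+1)*((n:ℝ)+1)^2) := by
          exact mul_le_mul_of_nonneg_left key h2
      _ = (risingFac (1/2) n ^ 2 * (2*(n:ℝ)+1)) * ((n:ℝ)+1)^2 := by ring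
      _ ≤ (n.factorial : ℝ)^2 * ((n:ℝ)+1)^2 := by
          exact mul_le_mul_of_nonneg_right ih (sq_nonneg _)
      _ = (((n:ℝ)+1) * (n.factorial : ℝ))^2 := by ring

/-- (A): rf(n+1/2, k) * rf(1/2, n) = rf(1/2, n+k) -/
lemma rf_shift_half (n k : ℕ) :
    risingFac ((n:ℝ) + 1/2) k * risingFac (1/2) n = risingFac (1/2) (n+k) := by
  induction k with
  | zero => simp [rf_zero]
  | succ k ih =>
    have h1 : n + (k+1) = (n+k) + 1 := by omega
    rw [h1, rf_succ, rf_succ, ← ih]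
    push_cast
    ring

/-- (B): rf(n+1, k) * n! = (n+k)! -/
lemma rf_shift_one (n k : ℕ) :
    risingFac ((n:ℝ) + 1) k * (n.factorial : ℝ) = ((n+k).factorial : ℝ) := by
  induction k with
  | zero => simp [rf_zero]
  | succ k ih =>
    have h1 : n + (k+1) = (n+k) + 1 := by omega
    rw [h1, rf_succ, Nat.factorial_succ]
    push_cast
    nlinarith [ih]

noncomputable def Phi (n k : ℕ) : ℝ :=
  (-1)^n * risingFac (1/2) n ^ 2 * risingFac (1/2) (n+k) * risingFac (1/2) k
    / ((n.factorial : ℝ) * ((n+k).factorial : ℝ)^2)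

/-- key telescoping identity -/
lemma key_step (n k : ℕ) :
    Phi n (k+1) * ((k:ℝ) + 1 + 2*n + 1/2) - Phi n k * ((k:ℝ) + 2*n + 1/2)
      = Phi (n+1) k * ((n:ℝ)+1) - Phi n k * (n:ℝ) := by
  unfold Phi
  have e1 : n + (k+1) = (n+k) + 1 := by omega
  have e2 : (n+1) + k = (n+k) + 1 := by omega
  rw [e1, e2, rf_succ, rf_succ, rf_succ, Nat.factorial_succ, Nat.factorial_succ]
  have hp : ((n.factorial : ℝ)) ≠ 0 := by positivity
  have hq : (((n+k).factorial : ℝ)) ≠ 0 := by positivity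
  have hn1 : ((n:ℝ)+1) ≠ 0 := by positivity
  have hnk1 : ((n:ℝ)+(k:ℝ)+1) ≠ 0 := by positivity
  push_cast
  field_simp
  ring

/-- the summand of the theorem, times (1/2)_k, equals Phi n k * (k+2n+1/2) -/
lemma term_eq (n k : ℕ) :
    risingFac (1/2) k * ((-1 : ℝ) ^ n * (risingFac (1 / 2) n / (n.factorial : ℝ)) ^ 3
          * risingFac ((n : ℝ) + 1 / 2) k * ((k : ℝ) + 2 * n + 1 / 2)
          / (risingFac ((n : ℝ) + 1) k) ^ 2)
      = Phi n k * ((k:ℝ) + 2 * n + 1/2) := by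
  have hA := rf_shift_half n k
  have hB := rf_shift_one n k
  have ha : risingFac (1/2) n ≠ 0 := ne_of_gt (rf_half_pos n)
  have hp : ((n.factorial : ℝ)) ≠ 0 := by positivity
  have hq : (((n+k).factorial : ℝ)) ≠ 0 := by positivity
  have hB0 : risingFac ((n:ℝ) + 1) k ≠ 0 := ne_of_gt (rf_pos (by positivity) k)
  have hA' : risingFac ((n:ℝ) + 1/2) k = risingFac (1/2) (n+k) / risingFac (1/2) n :=
    eq_div_of_mul_eq ha hA
  have hB' : risingFac ((n:ℝ) + 1) k = ((n+k).factorial : ℝ) / (n.factorial : ℝ) :=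
    eq_div_of_mul_eq hp hB
  rw [hA', hB']
  unfold Phi
  field_simp

/-- choose lemmas -/
lemma choose_diag_mono (n k : ℕ) : (n+k).choose n ≤ (n+1+k).choose (n+1) := by
  have h := Nat.add_one_mul_choose_eq (n+k) n
  -- succ (n+k) * choose (n+k) n = choose (n+k+1) (n+1) * succ n
  have e : n+1+k = n+k+1 := by omega
  rw [e]
  have h2 : (n+1) * ((n+k).choose n) ≤ ((n+k+1).choose (n+1)) * (n+1) := by
    calc (n+1) * ((n+k).choose n) ≤ (n+k+1) * ((n+k).choose n) :=
          Nat.mul_le_mul_right _ (by omega)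
      _ = Nat.succ (n+k) * (n+k).choose n := by rw [Nat.succ_eq_add_one]
      _ = ((n+k+1).choose (n+1)) * (n+1) := h
  have h3 : ((n+k).choose n) * (n+1) ≤ ((n+k+1).choose (n+1)) * (n+1) := by
    simpa [Nat.mul_comm] using h2
  exact Nat.le_of_mul_le_mul_right h3 (by omega)

lemma choose_lb2 {k : ℕ} (hk : 2 ≤ k) (n : ℕ) : (n+1)*(n+2) ≤ 2 * (n+k).choose n := by
  have h1 : (n+2).choose n ≤ (n+k).choose n := Nat.choose_le_choose n (by omega)
  have h2 : (n+2).choose n = (n+2).choose 2 := by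
    have := Nat.choose_symm (by omega : 2 ≤ n+2)
    rw [(by omega : n + 2 - 2 = n)] at this
    exact this
  have h3 : (n+2).choose 2 * 2 = (n+2)*(n+1) := by
    have := Nat.choose_mul_factorial_mul_factorial (by omega : 2 ≤ n+2)
    rw [(by omega : n + 2 - 2 = n)] at this
    have hf : (n+2).factorial = (n+2)*(n+1)*n.factorial := by
      rw [Nat.factorial_succ, Nat.factorial_succ]; ring
    have hfp := Nat.factorial_pos n
    simp [Nat.factorial] at this
    nlinarith [this, hfp]
  nlinarith [h1, h2, h3]

lemma choose_lb1 {n : ℕ} (hn : 1 ≤ n) (k : ℕ) : k + 1 ≤ (n+k).choose n := by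
  induction n with
  | zero => omega
  | succ n ih =>
    rcases Nat.eq_zero_or_pos n with h | h
    · subst h; simp [Nat.choose_one_right]
    · exact (ih h).trans (choose_diag_mono n k)

lemma choose_fact (n k : ℕ) :
    ((n+k).choose n : ℝ) * ((n.factorial : ℝ) * (k.factorial : ℝ)) = ((n+k).factorial : ℝ) := by
  have := Nat.choose_mul_factorial_mul_factorial (Nat.le_add_right n k)
  rw [Nat.add_sub_cancel_left] at this
  exact_mod_cast by push_cast [← this]; ring

lemma core_ineq {k : ℕ} (hk : 2 ≤ k) (n : ℕ) :
    risingFac (1/2) n ^2 * risingFac (1/2) (n+k) * risingFac (1/2) k * ((k:ℝ)+2*n+1/2)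
      * (((n:ℝ)+1)*((n:ℝ)+2)) ≤ 2 * (n.factorial:ℝ) * ((n+k).factorial:ℝ)^2 := by
  set a := risingFac (1/2) n with ha
  set b := risingFac (1/2) (n+k) with hb
  set c := risingFac (1/2) k with hc
  set p := (n.factorial : ℝ) with hp
  set q := ((n+k).factorial : ℝ) with hq
  set Ch := (((n+k).choose n : ℕ) : ℝ) with hch
  set N := (n:ℝ) with hN
  set K := (k:ℝ) with hK
  set F := (k.factorial : ℝ) with hF
  have hapos : 0 < a := rf_half_pos n
  have hbpos : 0 < b := rf_half_pos (n+k)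
  have hcpos : 0 < c := rf_half_pos k
  have hppos : 0 < p := by rw [hp]; exact_mod_cast Nat.factorial_pos n
  have hqpos : 0 < q := by rw [hq]; exact_mod_cast Nat.factorial_pos (n+k)
  have hFpos : 0 < F := by rw [hF]; exact_mod_cast Nat.factorial_pos k
  have hNpos : 0 ≤ N := Nat.cast_nonneg n
  have hKpos : 0 ≤ K := Nat.cast_nonneg k
  have h1 : b * F ≤ c * q := rf_mono n k
  have h2 : c^2 * (2*K+1) ≤ F^2 := rf_sq_bound k
  have h3 : a^2 * (2*N+1) ≤ p^2 := rf_sq_bound n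
  have hcF : c ≤ F := rf_le_fact k
  have h4 : (N+1)*(N+2) ≤ 2*Ch := by
    have := choose_lb2 hk n
    have := (Nat.cast_le (α := ℝ)).mpr this
    push_cast at this
    linarith
  have h5 : Ch * (p * F) = q := by
    have := choose_fact n k
    rw [← hch, ← hp, ← hF, ← hq] at this
    exact this
  have key : 2*F*(a^2 * b * c * (K+2*N+1/2) * ((N+1)*(N+2)))
      ≤ 2*F*(2 * p * q^2) := by
    calc 2*F*(a^2 * b * c * (K+2*N+1/2) * ((N+1)*(N+2)))
        = (a^2*c*((2*K+4*N+1)*((N+1)*(N+2))))*(b*F) := by ring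
      _ ≤ (a^2*c*((2*K+4*N+1)*((N+1)*(N+2))))*(c*q) := by
          have hnn : 0 ≤ a^2*c*((2*K+4*N+1)*((N+1)*(N+2))) := by positivity
          exact mul_le_mul_of_nonneg_left h1 hnn
      _ = (c^2*(2*K+1))*(a^2*(((N+1)*(N+2))*q))
            + (c^2)*((4*N)*(a^2*(((N+1)*(N+2))*q))) := by ring
      _ ≤ (F^2)*(a^2*(((N+1)*(N+2))*q)) + (F^2)*((4*N)*(a^2*(((N+1)*(N+2))*q))) := by
          have hx : 0 ≤ a^2*(((N+1)*(N+2))*q) := by positivity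
          have hy : 0 ≤ (4*N)*(a^2*(((N+1)*(N+2))*q)) := by positivity
          have hcc : c^2 ≤ F^2 := pow_le_pow_left₀ hcpos.le hcF 2
          exact add_le_add (mul_le_mul_of_nonneg_right h2 hx)
            (mul_le_mul_of_nonneg_right hcc hy)
      _ = (F^2*q*((N+1)*(N+2)))*(a^2*(4*N+1)) := by ring
      _ ≤ (F^2*q*((N+1)*(N+2)))*(a^2*(2*(2*N+1))) := by gcongr; linarith
      _ = (2*F^2*q)*((a^2*(2*N+1))*((N+1)*(N+2))) := by ring
      _ ≤ (2*F^2*q)*((p^2)*((N+1)*(N+2))) := by gcongr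
      _ = (p^2*F^2*q)*(2*((N+1)*(N+2))) := by ring
      _ ≤ (p^2*F^2*q)*(2*(2*Ch)) := by gcongr
      _ = 4*q*p*(Ch*(p*F))*F := by ring
      _ = 4*q*p*q*F := by rw [h5]
      _ = 2*F*(2 * p * q^2) := by ring
  have := le_of_mul_le_mul_left key (by positivity : (0:ℝ) < 2*F)
  linarith

lemma core_ineq2 {n : ℕ} (hn : 1 ≤ n) (k : ℕ) :
    risingFac (1/2) n ^2 * risingFac (1/2) (n+k) * risingFac (1/2) k * ((k:ℝ)+2*n+1/2)
      * ((k:ℝ)+1) ≤ 2 * ((n:ℝ)+1) * (n.factorial:ℝ) * ((n+k).factorial:ℝ)^2 := by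
  set a := risingFac (1/2) n with ha
  set b := risingFac (1/2) (n+k) with hb
  set c := risingFac (1/2) k with hc
  set p := (n.factorial : ℝ) with hp
  set q := ((n+k).factorial : ℝ) with hq
  set Ch := (((n+k).choose n : ℕ) : ℝ) with hch
  set N := (n:ℝ) with hN
  set K := (k:ℝ) with hK
  set F := (k.factorial : ℝ) with hF
  have hapos : 0 < a := rf_half_pos n
  have hbpos : 0 < b := rf_half_pos (n+k)
  have hcpos : 0 < c := rf_half_pos k
  have hppos : 0 < p := by rw [hp]; exact_mod_cast Nat.factorial_pos n
  have hqpos : 0 < q := by rw [hq]; exact_mod_cast Nat.factorial_pos (n+k)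
  have hFpos : 0 < F := by rw [hF]; exact_mod_cast Nat.factorial_pos k
  have hNpos : 0 ≤ N := Nat.cast_nonneg n
  have hKpos : 0 ≤ K := Nat.cast_nonneg k
  have h1 : b * F ≤ c * q := rf_mono n k
  have h2 : c^2 * (2*K+1) ≤ F^2 := rf_sq_bound k
  have hcF : c ≤ F := rf_le_fact k
  have hap : a ≤ p := rf_le_fact n
  have h4 : K + 1 ≤ Ch := by
    have := choose_lb1 hn k
    have := (Nat.cast_le (α := ℝ)).mpr this
    push_cast at this
    linarith
  have h5 : Ch * (p * F) = q := by
    have := choose_fact n k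
    rw [← hch, ← hp, ← hF, ← hq] at this
    exact this
  have key : 2*F*(a^2 * b * c * (K+2*N+1/2) * (K+1))
      ≤ 2*F*(2 * (N+1) * p * q^2) := by
    calc 2*F*(a^2 * b * c * (K+2*N+1/2) * (K+1))
        = (a^2*c*((2*K+4*N+1)*(K+1)))*(b*F) := by ring
      _ ≤ (a^2*c*((2*K+4*N+1)*(K+1)))*(c*q) := by
          have hnn : 0 ≤ a^2*c*((2*K+4*N+1)*(K+1)) := by positivity
          exact mul_le_mul_of_nonneg_left h1 hnn
      _ = (c^2*(2*K+1))*(a^2*((K+1)*q)) + (c^2)*((4*N)*(a^2*((K+1)*q))) := by ring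
      _ ≤ (F^2)*(a^2*((K+1)*q)) + (F^2)*((4*N)*(a^2*((K+1)*q))) := by
          have hx : 0 ≤ a^2*((K+1)*q) := by positivity
          have hy : 0 ≤ (4*N)*(a^2*((K+1)*q)) := by positivity
          have hcc : c^2 ≤ F^2 := pow_le_pow_left₀ hcpos.le hcF 2
          exact add_le_add (mul_le_mul_of_nonneg_right h2 hx)
            (mul_le_mul_of_nonneg_right hcc hy)
      _ = (F^2*q*(K+1))*(a^2*(4*N+1)) := by ring
      _ ≤ (F^2*q*(K+1))*(a^2*(4*(N+1))) := by gcongr; linarith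
      _ = (4*(N+1)*F^2*q*(K+1))*(a^2) := by ring
      _ ≤ (4*(N+1)*F^2*q*(K+1))*(p^2) := by
          have : a^2 ≤ p^2 := pow_le_pow_left₀ hapos.le hap 2
          have hnn : 0 ≤ 4*(N+1)*F^2*q*(K+1) := by positivity
          exact mul_le_mul_of_nonneg_left this hnn
      _ = (4*(N+1)*F^2*p^2*q)*(K+1) := by ring
      _ ≤ (4*(N+1)*F^2*p^2*q)*Ch := by gcongr
      _ = (4*(N+1)*p*F*q)*(Ch*(p*F)) := by ring
      _ = (4*(N+1)*p*F*q)*q := by rw [h5]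
      _ = 2*F*(2 * (N+1) * p * q^2) := by ring
  have := le_of_mul_le_mul_left key (by positivity : (0:ℝ) < 2*F)
  linarith

noncomputable def pf (n k : ℕ) : ℝ := Phi n k * ((k:ℝ) + 2*(n:ℝ) + 1/2)

lemma abs_pf (n k : ℕ) : |pf n k| =
    risingFac (1/2) n ^2 * risingFac (1/2) (n+k) * risingFac (1/2) k * ((k:ℝ)+2*n+1/2)
      / ((n.factorial:ℝ) * ((n+k).factorial:ℝ)^2) := by
  have h : pf n k = (-1)^n *
      (risingFac (1/2) n ^2 * risingFac (1/2) (n+k) * risingFac (1/2) k * ((k:ℝ)+2*n+1/2)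
      / ((n.factorial:ℝ) * ((n+k).factorial:ℝ)^2)) := by
    unfold pf Phi; ring
  rw [h, abs_mul, abs_pow, abs_neg, abs_one, one_pow, one_mul, abs_of_nonneg]
  have h1 : (0:ℝ) < risingFac (1/2) n := rf_half_pos n
  have h2 : (0:ℝ) < risingFac (1/2) (n+k) := rf_half_pos (n+k)
  have h3 : (0:ℝ) < risingFac (1/2) k := rf_half_pos k
  have h4 : (0:ℝ) < (n.factorial:ℝ) := by exact_mod_cast Nat.factorial_pos n
  have h5 : (0:ℝ) < ((n+k).factorial:ℝ) := by exact_mod_cast Nat.factorial_pos (n+k)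
  have h6 : (0:ℝ) ≤ (k:ℝ)+2*n+1/2 := by positivity
  positivity

lemma pf_bound {k : ℕ} (hk : 2 ≤ k) (n : ℕ) :
    |pf n k| ≤ 2 / (((n:ℝ)+1)*((n:ℝ)+2)) := by
  rw [abs_pf]
  have h4 : (0:ℝ) < (n.factorial:ℝ) := by exact_mod_cast Nat.factorial_pos n
  have h5 : (0:ℝ) < ((n+k).factorial:ℝ) := by exact_mod_cast Nat.factorial_pos (n+k)
  rw [div_le_div_iff₀ (by positivity) (by positivity)]
  calc risingFac (1/2) n ^2 * risingFac (1/2) (n+k) * risingFac (1/2) k * ((k:ℝ)+2*n+1/2)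
        * (((n:ℝ)+1)*((n:ℝ)+2)) ≤ 2 * (n.factorial:ℝ) * ((n+k).factorial:ℝ)^2 :=
      core_ineq hk n
    _ = 2 * ((n.factorial:ℝ) * ((n+k).factorial:ℝ)^2) := by ring

lemma pf_bound2 {n : ℕ} (hn : 1 ≤ n) (k : ℕ) :
    |pf n k| ≤ (2*((n:ℝ)+1)) / ((k:ℝ)+1) := by
  rw [abs_pf]
  have h4 : (0:ℝ) < (n.factorial:ℝ) := by exact_mod_cast Nat.factorial_pos n
  have h5 : (0:ℝ) < ((n+k).factorial:ℝ) := by exact_mod_cast Nat.factorial_pos (n+k)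
  rw [div_le_div_iff₀ (by positivity) (by positivity)]
  calc risingFac (1/2) n ^2 * risingFac (1/2) (n+k) * risingFac (1/2) k * ((k:ℝ)+2*n+1/2)
        * ((k:ℝ)+1) ≤ 2 * ((n:ℝ)+1) * (n.factorial:ℝ) * ((n+k).factorial:ℝ)^2 :=
      core_ineq2 hn k
    _ = 2*((n:ℝ)+1) * ((n.factorial:ℝ) * ((n+k).factorial:ℝ)^2) := by ring

lemma abs_G_le (n k : ℕ) : |Phi n k * (n:ℝ)| ≤ |pf n k| := by
  have h : |Phi n k * (n:ℝ)| = |Phi n k| * (n:ℝ) := by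
    rw [abs_mul, abs_of_nonneg (Nat.cast_nonneg (α := ℝ) n)]
  have h2 : |pf n k| = |Phi n k| * ((k:ℝ)+2*n+1/2) := by
    rw [pf, abs_mul, abs_of_nonneg (by positivity : (0:ℝ) ≤ (k:ℝ)+2*(n:ℝ)+1/2)]
  rw [h, h2]
  exact mul_le_mul_of_nonneg_left (by push_cast; linarith [Nat.cast_nonneg (α := ℝ) k, Nat.cast_nonneg (α := ℝ) n]) (abs_nonneg _)

noncomputable def W (k : ℕ) : ℝ :=
  ∏ i ∈ Finset.range k, (((2:ℝ)*i+2)/(2*i+1) * ((2*i+2)/(2*i+3)))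

lemma W_pos (k : ℕ) : 0 < W k :=
  Finset.prod_pos fun i _ => by positivity

lemma W_rf (k : ℕ) : W k * risingFac (1/2) k ^2 * (2*(k:ℝ)+1) = (k.factorial:ℝ)^2 := by
  induction k with
  | zero => norm_num [W, rf_zero]
  | succ k ih =>
    have hpos1 : (2*(k:ℝ)+1) ≠ 0 := by positivity
    have hpos2 : (2*(k:ℝ)+3) ≠ 0 := by positivity
    rw [W, Finset.prod_range_succ, ← W, rf_succ, Nat.factorial_succ]
    push_cast
    calc W k * ((2*(k:ℝ)+2)/(2*(k:ℝ)+1) * ((2*(k:ℝ)+2)/(2*(k:ℝ)+3)))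
          * (risingFac (1/2) k * (1/2 + (k:ℝ)))^2 * (2*((k:ℝ)+1)+1)
        = (W k * risingFac (1/2) k ^2 * (2*(k:ℝ)+1)) * (((k:ℝ)+1)^2) := by
          field_simp
          ring
      _ = (k.factorial:ℝ)^2 * (((k:ℝ)+1)^2) := by rw [ih]
      _ = (((k:ℝ)+1) * (k.factorial:ℝ))^2 := by ring

lemma pf_zero (k : ℕ) :
    pf 0 k = risingFac (1/2) k ^2 * ((k:ℝ)+1/2) / (k.factorial:ℝ)^2 := by
  unfold pf Phi
  simp [rf_zero]
  ring

lemma wallis_limit :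
    Filter.Tendsto (fun k : ℕ => pf 0 k) Filter.atTop (nhds (1/Real.pi)) := by
  have heq : ∀ k : ℕ, pf 0 k = 1 / (2 * W k) := by
    intro k
    have hWpos := W_pos k
    have hfpos : (0:ℝ) < (k.factorial:ℝ) := by exact_mod_cast Nat.factorial_pos k
    apply eq_div_of_mul_eq (by positivity)
    rw [pf_zero]
    have e1 : risingFac (1/2) k ^2 * ((k:ℝ)+1/2) / (k.factorial:ℝ)^2 * (2 * W k)
        = (W k * risingFac (1/2) k ^2 * (2*(k:ℝ)+1)) / (k.factorial:ℝ)^2 := by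
      ring
    rw [e1, W_rf k, div_self (by positivity)]
  have hWt : Filter.Tendsto W Filter.atTop (nhds (Real.pi/2)) := by
    have := Real.tendsto_prod_pi_div_two
    exact this
  have h2 : Filter.Tendsto (fun k => 2 * W k) Filter.atTop (nhds Real.pi) := by
    have h := hWt.const_mul (2:ℝ)
    have e : (2:ℝ) * (Real.pi/2) = Real.pi := by ring
    rwa [e] at h
  have := (tendsto_const_nhds (x := (1:ℝ))).div h2 Real.pi_ne_zero
  simp only [heq]
  exact this

lemma tendsto_div_add_one (C : ℝ) :
    Filter.Tendsto (fun k : ℕ => C / ((k:ℝ)+1)) Filter.atTop (nhds 0) := by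
  have h := (tendsto_const_div_atTop_nhds_zero_nat C).comp (Filter.tendsto_add_atTop_nat 1)
  have heq : ((fun k : ℕ => C/(k:ℝ)) ∘ (fun a => a+1)) = fun k : ℕ => C/((k:ℝ)+1) := by
    funext k
    simp only [Function.comp_apply]
    norm_cast
  rwa [heq] at h

lemma tendsto_bound_zero :
    Filter.Tendsto (fun N : ℕ => 2 / (((N:ℝ)+1)*((N:ℝ)+2))) Filter.atTop (nhds 0) := by
  refine squeeze_zero (fun N => by positivity) (fun N => ?_) (tendsto_div_add_one 2)
  have hN : (0:ℝ) ≤ (N:ℝ) := Nat.cast_nonneg N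
  have h1 : ((N:ℝ)+1) ≤ ((N:ℝ)+1)*((N:ℝ)+2) := by nlinarith
  gcongr

lemma pf_limit (n : ℕ) (hn : 1 ≤ n) :
    Filter.Tendsto (fun k : ℕ => pf n k) Filter.atTop (nhds 0) := by
  exact squeeze_zero_norm (a := fun k : ℕ => (2*((n:ℝ)+1))/((k:ℝ)+1))
    (fun k => by rw [Real.norm_eq_abs]; exact pf_bound2 hn k) (tendsto_div_add_one _)

lemma sum_bound : Summable (fun n : ℕ => 2 / (((n:ℝ)+1)*((n:ℝ)+2))) := by
  have h1 : Summable (fun n : ℕ => 1 / ((n:ℝ))^2) := Real.summable_one_div_nat_pow.mpr one_lt_two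
  have h2 : Summable (fun n : ℕ => 1 / ((n:ℝ)+1)^2) := by
    have := (summable_nat_add_iff 1).mpr h1
    simpa [Nat.cast_add] using this
  apply Summable.of_nonneg_of_le (fun n => by positivity) _ (h2.mul_left 2)
  intro n
  have hN : (0:ℝ) ≤ (n:ℝ) := Nat.cast_nonneg n
  have key : ((n:ℝ)+1)^2 ≤ ((n:ℝ)+1)*((n:ℝ)+2) := by nlinarith
  calc 2 / (((n:ℝ)+1)*((n:ℝ)+2)) ≤ 2 / ((n:ℝ)+1)^2 := by
        gcongr
    _ = 2 * (1/((n:ℝ)+1)^2) := by ring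

lemma pf_norm_summable {k : ℕ} (hk : 2 ≤ k) : Summable (fun n => ‖pf n k‖) :=
  Summable.of_nonneg_of_le (fun n => norm_nonneg _)
    (fun n => by rw [Real.norm_eq_abs]; exact pf_bound hk n) sum_bound

lemma pf_summable {k : ℕ} (hk : 2 ≤ k) : Summable (fun n => pf n k) :=
  (pf_norm_summable hk).of_norm

lemma T_succ {k : ℕ} (hk : 2 ≤ k) : ∑' n, pf n (k+1) = ∑' n, pf n k := by
  have hs1 : Summable (fun n => pf n (k+1)) := pf_summable (by omega)
  have hs2 : Summable (fun n => pf n k) := pf_summable hk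
  have hnorm : Summable (fun n => ‖pf n (k+1) - pf n k‖) :=
    Summable.of_nonneg_of_le (fun n => norm_nonneg _)
      (fun n => (norm_sub_le _ _).trans (by
        rw [Real.norm_eq_abs, Real.norm_eq_abs]
        exact add_le_add (pf_bound (by omega) n) (pf_bound hk n)))
      (sum_bound.add sum_bound)
  have hzero : HasSum (fun n => pf n (k+1) - pf n k) 0 := by
    rw [hasSum_iff_tendsto_nat_of_summable_norm hnorm]
    have hsum_eq : ∀ N, ∑ n ∈ Finset.range N, (pf n (k+1) - pf n k) = Phi N k * (N:ℝ) := by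
      intro N
      have step : ∀ n ∈ Finset.range N, pf n (k+1) - pf n k
          = (fun m => Phi m k * (m:ℝ)) (n+1) - (fun m => Phi m k * (m:ℝ)) n := by
        intro n _
        have := key_step n k
        simp only [pf]
        push_cast
        push_cast at this
        linarith [this]
      rw [Finset.sum_congr rfl step, Finset.sum_range_sub (fun m => Phi m k * (m:ℝ))]
      simp
    have hb : ∀ N : ℕ, ‖Phi N k * (N:ℝ)‖ ≤ 2 / (((N:ℝ)+1)*((N:ℝ)+2)) := by
      intro N
      rw [Real.norm_eq_abs]
      exact (abs_G_le N k).trans (pf_bound hk N)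
    have := squeeze_zero_norm hb tendsto_bound_zero
    exact Filter.Tendsto.congr (fun N => (hsum_eq N).symm) this
  have hdiff : HasSum (fun n => pf n (k+1) - pf n k) (∑' n, pf n (k+1) - ∑' n, pf n k) :=
    hs1.hasSum.sub hs2.hasSum
  have := hzero.unique hdiff
  linarith

lemma T_const {k : ℕ} (hk : 2 ≤ k) : ∀ j, (∑' n, pf n (k+j)) = ∑' n, pf n k := by
  intro j
  induction j with
  | zero => rfl
  | succ j ih =>
    have : k + (j+1) = (k+j) + 1 := by omega
    rw [this, T_succ (by omega), ih]

lemma T_limit :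
    Filter.Tendsto (fun j : ℕ => ∑' n, pf n (j+2)) Filter.atTop
      (nhds (1/Real.pi)) := by
  have key := tendsto_tsum_of_dominated_convergence
    (f := fun (j : ℕ) (n : ℕ) => pf n (j+2))
    (g := fun n => if n = 0 then 1/Real.pi else 0)
    (bound := fun n => 2 / (((n:ℝ)+1)*((n:ℝ)+2)))
    sum_bound
    (by
      intro n
      rcases Nat.eq_zero_or_pos n with h | h
      · subst h
        simp only [if_pos rfl]
        exact wallis_limit.comp (Filter.tendsto_add_atTop_nat 2)
      · simp only [if_neg (by omega : ¬ n = 0)]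
        exact (pf_limit n h).comp (Filter.tendsto_add_atTop_nat 2))
    (Filter.Eventually.of_forall (fun j n => by
      rw [Real.norm_eq_abs]
      exact pf_bound (by omega) n))
  have : (∑' n : ℕ, if n = 0 then 1/Real.pi else 0) = 1/Real.pi := tsum_ite_eq 0 (fun _ => 1/Real.pi)
  rwa [this] at key

lemma T_eq {k : ℕ} (hk : 2 ≤ k) : ∑' n, pf n k = 1/Real.pi := by
  have h2 : ∀ᶠ j in Filter.atTop, (∑' n, pf n (j+2)) = ∑' n, pf n k := by
    rw [Filter.eventually_atTop]
    refine ⟨k, fun j hj => ?_⟩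
    have := T_const hk (j + 2 - k)
    rwa [Nat.add_sub_cancel' (by omega : k ≤ j + 2)] at this
  have h3 : Filter.Tendsto (fun _ : ℕ => ∑' n, pf n k) Filter.atTop (nhds (1/Real.pi)) :=
    T_limit.congr' h2
  exact tendsto_nhds_unique tendsto_const_nhds h3

theorem one_div_pi_subfamily (k : ℕ) (hk : 2 ≤ k) :
    ∃ S : ℝ, Filter.Tendsto
      (fun N : ℕ => ∑ n ∈ Finset.range N,
        (-1 : ℝ) ^ n * (risingFac (1 / 2) n / (n.factorial : ℝ)) ^ 3
          * risingFac ((n : ℝ) + 1 / 2) k * ((k : ℝ) + 2 * n + 1 / 2)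
          / (risingFac ((n : ℝ) + 1) k) ^ 2)
      Filter.atTop (nhds S) ∧
    1 / Real.pi = risingFac (1 / 2) k * S := by
  set t : ℕ → ℝ := fun n =>
    (-1 : ℝ) ^ n * (risingFac (1 / 2) n / (n.factorial : ℝ)) ^ 3
      * risingFac ((n : ℝ) + 1 / 2) k * ((k : ℝ) + 2 * n + 1 / 2)
      / (risingFac ((n : ℝ) + 1) k) ^ 2 with ht
  have hrk : risingFac (1/2) k ≠ 0 := ne_of_gt (rf_half_pos k)
  have hteq : ∀ n, pf n k = risingFac (1/2) k * t n := by
    intro n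
    rw [ht]
    exact (term_eq n k).symm
  have hsum_t : Summable t := by
    have h := pf_summable hk
    have : t = fun n => pf n k / risingFac (1/2) k := by
      funext n
      rw [hteq n]
      field_simp
    rw [this]
    exact h.div_const _
  refine ⟨∑' n, t n, hsum_t.hasSum.tendsto_sum_nat, ?_⟩
  have : risingFac (1/2) k * ∑' n, t n = ∑' n, risingFac (1/2) k * t n := by
    rw [tsum_mul_left]
  rw [this]
  have : (∑' n, risingFac (1/2) k * t n) = ∑' n, pf n k := by
    congr 1
    funext n
    exact (hteq n).symm
  rw [this, T_eq hk]
end
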